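/- Let φ : Σ → M be a smooth surjective map between finite-dimensional smooth manifolds of the same dimension, with Σ second countable. Then the set of points m ∈ M such that φ is a local diffeomorphism at some preimage of m is dense in M. -/

import Mathlib

open Manifold

open Set MeasureTheory


section Helpers

variable {F : Type*} [NormedAddCommGroup F] [NormedSpace ℝ F]

lemma cle_of_isUnit {L : F →L[ℝ] F} (h : IsUnit L) :
    ∃ A : F ≃L[ℝ] F, (A : F →L[ℝ] F) = L := by
  obtain ⟨u, rfl⟩ := h
  exact ⟨ContinuousLinearEquiv.ofUnit u, rfl⟩

lemma isUnit_of_det_ne_zero [FiniteDimensional ℝ F] {L : F →L[ℝ] F}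
    (h : L.det ≠ 0) : IsUnit L := by
  set A := ((L : F →ₗ[ℝ] F).equivOfDetNeZero h).toContinuousLinearEquiv with hA
  have hcoe : ∀ x, A x = L x := fun x => by
    simp [hA, LinearMap.equivOfDetNeZero]
  refine ⟨A.toUnit, ?_⟩
  ext x
  exact hcoe x

end Helpers

section Euc

variable {F : Type*} [NormedAddCommGroup F] [NormedSpace ℝ F] [FiniteDimensional ℝ F]

lemma one_le_top' : (1 : WithTop ℕ∞) ≤ ((⊤ : ℕ∞) : WithTop ℕ∞) := by
  exact_mod_cast (le_top : (1 : ℕ∞) ≤ ⊤)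

lemma top_ne_zero' : ((⊤ : ℕ∞) : WithTop ℕ∞) ≠ 0 := by
  simp

lemma eucIFT {G : F → F} {x : F} {O : Set F}
    (hO : IsOpen O) (hxO : x ∈ O) (hG : ContDiffOn ℝ (⊤ : ℕ∞) G O)
    (hdet : IsUnit (fderiv ℝ G x)) :
    ∃ P : OpenPartialHomeomorph F F,
      x ∈ P.source ∧ P.source ⊆ O ∧ Set.EqOn G P P.source ∧
      ContDiffOn ℝ (⊤ : ℕ∞) P.symm P.target := by
  obtain ⟨A, hA⟩ := cle_of_isUnit hdet
  have hGx : ContDiffAt ℝ (⊤ : ℕ∞) G x := hG.contDiffAt (hO.mem_nhds hxO)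
  have hfd : HasFDerivAt G (A : F →L[ℝ] F) x := by
    rw [hA]; exact (hGx.differentiableAt top_ne_zero').hasFDerivAt
  have hWopen : IsOpen (O ∩ (fderiv ℝ G) ⁻¹' {L | IsUnit L}) :=
    (hG.continuousOn_fderiv_of_isOpen hO one_le_top').isOpen_inter_preimage hO Units.isOpen
  set W := O ∩ (fderiv ℝ G) ⁻¹' {L | IsUnit L} with hW
  set H := hGx.toOpenPartialHomeomorph G hfd top_ne_zero' with hH
  have hHcoe : ⇑H = G := rfl
  have htarget : (H.restrOpen W hWopen).target = H.target ∩ H.symm ⁻¹' W := by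
    show (H.restrOpen W hWopen).toPartialEquiv.target = _
    rw [OpenPartialHomeomorph.restrOpen_toPartialEquiv, PartialEquiv.restr_target]
    rfl
  refine ⟨H.restrOpen W hWopen,
    by rw [H.restrOpen_source]; exact ⟨hGx.mem_toOpenPartialHomeomorph_source hfd top_ne_zero', hxO, hdet⟩,
    by rw [H.restrOpen_source]; exact fun z hz => hz.2.1,
    fun z hz => rfl, ?_⟩
  intro y hy
  rw [htarget] at hy
  obtain ⟨hy1, hy2, hy3⟩ : y ∈ H.target ∧ H.symm y ∈ O ∧ IsUnit (fderiv ℝ G (H.symm y)) :=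
    ⟨hy.1, hy.2.1, hy.2.2⟩
  obtain ⟨A', hA'⟩ := cle_of_isUnit hy3
  have hGs : ContDiffAt ℝ (⊤ : ℕ∞) G (H.symm y) := hG.contDiffAt (hO.mem_nhds hy2)
  have := H.contDiffAt_symm hy1
    (by rw [hA']; exact (hGs.differentiableAt top_ne_zero').hasFDerivAt) hGs
  exact this.contDiffWithinAt

end Euc

section Mfd

variable {n : ℕ}
    {S : Type*} [TopologicalSpace S] [ChartedSpace (EuclideanSpace ℝ (Fin n)) S]
    [IsManifold (𝓡 n) (⊤ : ℕ∞) S]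
    {M : Type*} [TopologicalSpace M] [ChartedSpace (EuclideanSpace ℝ (Fin n)) M]
    [IsManifold (𝓡 n) (⊤ : ℕ∞) M]

local notation "EE" => EuclideanSpace ℝ (Fin ‹ℕ›)

lemma smoothOn_rep (φ : S → M) (hφ : ContMDiff (𝓡 n) (𝓡 n) (⊤ : ℕ∞) φ) (σ' : S) (m' : M) :
    ContDiffOn ℝ (⊤ : ℕ∞) (chartAt EE m' ∘ φ ∘ (chartAt EE σ').symm)
      ((chartAt EE σ').target ∩ (chartAt EE σ').symm ⁻¹' (φ ⁻¹' (chartAt EE m').source)) := by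
  rw [← contMDiffOn_iff_contDiffOn]
  have h2 : ContMDiffOn (𝓡 n) (𝓡 n) (⊤ : ℕ∞) (chartAt EE σ').symm (chartAt EE σ').target :=
    contMDiffOn_chart_symm
  have h12 : ContMDiffOn (𝓡 n) (𝓡 n) (⊤ : ℕ∞) (φ ∘ (chartAt EE σ').symm)
      ((chartAt EE σ').target ∩ (chartAt EE σ').symm ⁻¹' (φ ⁻¹' (chartAt EE m').source)) :=
    (hφ.comp_contMDiffOn (h2.mono inter_subset_left))
  have h1 : ContMDiffOn (𝓡 n) (𝓡 n) (⊤ : ℕ∞) (chartAt EE m') (chartAt EE m').source :=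
    contMDiffOn_chart
  exact h1.comp h12 (fun x hx => hx.2)

lemma isOpen_O (φ : S → M) (hφ : ContMDiff (𝓡 n) (𝓡 n) (⊤ : ℕ∞) φ) (σ' : S) (m' : M) :
    IsOpen ((chartAt EE σ').target ∩ (chartAt EE σ').symm ⁻¹' (φ ⁻¹' (chartAt EE m').source)) :=
  (chartAt EE σ').continuousOn_symm.isOpen_inter_preimage (chartAt EE σ').open_target
    ((chartAt EE m').open_source.preimage hφ.continuous)

lemma key (φ : S → M) (hφ : ContMDiff (𝓡 n) (𝓡 n) (⊤ : ℕ∞) φ) {σ' : S} {m' : M} {σ : S}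
    (hσ : σ ∈ (chartAt EE σ').source) (hm : φ σ ∈ (chartAt EE m').source)
    (hdet : IsUnit (fderiv ℝ (chartAt EE m' ∘ φ ∘ (chartAt EE σ').symm) (chartAt EE σ' σ))) :
    IsLocalDiffeomorphAt (𝓡 n) (𝓡 n) (⊤ : ℕ∞) φ σ := by
  set e := chartAt EE σ' with he
  set f := chartAt EE m' with hf
  set G := f ∘ φ ∘ e.symm with hG
  set O := e.target ∩ e.symm ⁻¹' (φ ⁻¹' f.source) with hO
  have hOopen : IsOpen O := isOpen_O φ hφ σ' m'
  have hsmooth : ContDiffOn ℝ (⊤ : ℕ∞) G O := smoothOn_rep φ hφ σ' m'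
  have hxO : e σ ∈ O := ⟨e.map_source hσ, by
    rw [mem_preimage, mem_preimage, e.left_inv hσ]; exact hm⟩
  obtain ⟨P, hxP, hPO, hPeq, hPsymm⟩ := eucIFT hOopen hxO hsmooth hdet
  set Q := (e.trans P).trans f.symm with hQ
  -- characterize source
  have hQsrc : ∀ x, x ∈ Q.source ↔ x ∈ e.source ∧ e x ∈ P.source ∧ P (e x) ∈ f.target := by
    intro x
    simp only [hQ, OpenPartialHomeomorph.trans_source, OpenPartialHomeomorph.symm_source,
      mem_inter_iff, mem_preimage, OpenPartialHomeomorph.coe_trans, Function.comp_apply, and_assoc]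
  have hφmem : ∀ x, e x ∈ P.source → x ∈ e.source → φ x ∈ f.source := by
    intro x hxP' hxe
    have := (hPO hxP').2
    rwa [mem_preimage, mem_preimage, e.left_inv hxe] at this
  have hEq : EqOn φ (⇑Q) Q.source := by
    intro x hx
    obtain ⟨hx1, hx2, hx3⟩ := (hQsrc x).1 hx
    have h1 : Q x = f.symm (P (e x)) := rfl
    have h2 : P (e x) = G (e x) := (hPeq hx2).symm
    have h3 : G (e x) = f (φ x) := by
      simp only [hG, Function.comp_apply, e.left_inv hx1]
    rw [h1, h2, h3, f.left_inv (hφmem x hx2 hx1)]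
  have hσQ : σ ∈ Q.source := by
    rw [hQsrc]
    refine ⟨hσ, hxP, ?_⟩
    rw [← hPeq hxP]
    have h3 : G (e σ) = f (φ σ) := by
      simp only [hG, Function.comp_apply, e.left_inv hσ]
    rw [h3]
    exact f.map_source hm
  -- characterize target
  have hQtgt : ∀ y, y ∈ Q.target → y ∈ f.source ∧ f y ∈ P.target ∧ P.symm (f y) ∈ e.target := by
    intro y hy
    simp only [hQ, OpenPartialHomeomorph.trans_target, OpenPartialHomeomorph.symm_target,
      mem_inter_iff, mem_preimage, OpenPartialHomeomorph.symm_symm,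
      OpenPartialHomeomorph.coe_trans_symm, Function.comp_apply] at hy
    exact ⟨hy.1, hy.2.1, hy.2.2⟩
  have hinv : ContMDiffOn (𝓡 n) (𝓡 n) (⊤ : ℕ∞) (⇑Q.symm) Q.target := by
    intro y hy
    obtain ⟨hy1, hy2, hy3⟩ := hQtgt y hy
    have c1 : ContMDiffAt (𝓡 n) (𝓡 n) (⊤ : ℕ∞) (⇑f) y :=
      contMDiffOn_chart.contMDiffAt (f.open_source.mem_nhds hy1)
    have c2 : ContMDiffAt (𝓡 n) (𝓡 n) (⊤ : ℕ∞) (⇑P.symm) (f y) :=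
      contMDiffAt_iff_contDiffAt.mpr (hPsymm.contDiffAt (P.open_target.mem_nhds hy2))
    have c3 : ContMDiffAt (𝓡 n) (𝓡 n) (⊤ : ℕ∞) (⇑e.symm) (P.symm (f y)) :=
      contMDiffOn_chart_symm.contMDiffAt (e.open_target.mem_nhds hy3)
    have ctot : ContMDiffAt (𝓡 n) (𝓡 n) (⊤ : ℕ∞) ((⇑e.symm ∘ ⇑P.symm) ∘ ⇑f) y :=
      (c3.comp (f y) c2).comp y c1
    have hcoe : ⇑Q.symm = (⇑e.symm ∘ ⇑P.symm) ∘ ⇑f := by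
      simp only [hQ, OpenPartialHomeomorph.coe_trans_symm, OpenPartialHomeomorph.symm_symm]
    rw [hcoe]
    exact ctot.contMDiffWithinAt
  exact ⟨⟨Q.toPartialEquiv, Q.open_source, Q.open_target,
    hφ.contMDiffOn.congr (fun x hx => (hEq hx).symm), hinv⟩, hσQ, hEq⟩

end Mfd


/-- Let `φ : Σ → M` be a smooth surjective map between smooth `n`-manifolds, with `Σ`
second countable. Then the set of points `m ∈ M` having a preimage at which `φ` is a local
diffeomorphism is dense in `M`. -/
theorem stmt_12 {n : ℕ}
    {S : Type*} [TopologicalSpace S] [ChartedSpace (EuclideanSpace ℝ (Fin n)) S]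
    [IsManifold (𝓡 n) (⊤ : ℕ∞) S] [SecondCountableTopology S]
    {M : Type*} [TopologicalSpace M] [ChartedSpace (EuclideanSpace ℝ (Fin n)) M]
    [IsManifold (𝓡 n) (⊤ : ℕ∞) M]
    (φ : S → M) (hφ : ContMDiff (𝓡 n) (𝓡 n) (⊤ : ℕ∞) φ) (hsurj : Function.Surjective φ) :
    Dense {m : M | ∃ σ : S, φ σ = m ∧ IsLocalDiffeomorphAt (𝓡 n) (𝓡 n) (⊤ : ℕ∞) φ σ} := by
  classical
  rw [dense_iff_inter_open]
  rintro U hU ⟨m, hmU⟩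
  by_contra hcon
  rw [not_nonempty_iff_eq_empty] at hcon
  set EE := EuclideanSpace ℝ (Fin n) with hEE
  set f := chartAt EE m with hf
  -- countable chart cover of S
  obtain ⟨T, hTc, hTu⟩ := TopologicalSpace.isOpen_iUnion_countable
    (fun σ' : S => (chartAt EE σ').source) (fun σ' => (chartAt EE σ').open_source)
  have hcover : ∀ σ : S, ∃ σ' ∈ T, σ ∈ (chartAt EE σ').source := by
    intro σ
    have : σ ∈ ⋃ σ' ∈ T, (chartAt EE σ').source := by
      rw [hTu]; exact mem_iUnion.2 ⟨σ, mem_chart_source EE σ⟩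
    simpa using this
  -- the critical set
  set K := {σ : S | ¬ IsLocalDiffeomorphAt (𝓡 n) (𝓡 n) (⊤ : ℕ∞) φ σ} with hK
  set A : S → Set EE := fun σ' =>
    (chartAt EE σ') '' (K ∩ φ ⁻¹' f.source ∩ (chartAt EE σ').source) with hA
  set G : S → EE → EE := fun σ' => f ∘ φ ∘ (chartAt EE σ').symm with hGdef
  -- each image of critical points has measure zero (Sard)
  have claim1 : ∀ σ' : S, volume ((G σ') '' (A σ')) = 0 := by
    intro σ'
    apply addHaar_image_eq_zero_of_det_fderivWithin_eq_zero volume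
      (f' := fun x => fderiv ℝ (G σ') x)
    · rintro x ⟨σ'', ⟨⟨h1, h2⟩, h3⟩, rfl⟩
      have hxO : chartAt EE σ' σ'' ∈ (chartAt EE σ').target ∩
          (chartAt EE σ').symm ⁻¹' (φ ⁻¹' (chartAt EE m).source) := by
        refine ⟨(chartAt EE σ').map_source h3, ?_⟩
        rw [mem_preimage, mem_preimage, (chartAt EE σ').left_inv h3]
        exact h2
      have hcd : ContDiffAt ℝ (⊤ : ℕ∞) (G σ') (chartAt EE σ' σ'') :=
        (smoothOn_rep φ hφ σ' m).contDiffAt ((isOpen_O φ hφ σ' m).mem_nhds hxO)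
      exact ((hcd.differentiableAt top_ne_zero').hasFDerivAt).hasFDerivWithinAt
    · rintro x ⟨σ'', ⟨⟨h1, h2⟩, h3⟩, rfl⟩
      by_contra hdz
      exact h1 (key φ hφ h3 h2 (isUnit_of_det_ne_zero hdz))
  -- the image of U in the chart at m
  set V := f '' (U ∩ f.source) with hV
  have hVeq : V = f.target ∩ f.symm ⁻¹' U := by
    rw [hV, inter_comm, f.image_source_inter_eq']
  have hVopen : IsOpen V := by
    rw [hVeq]
    exact f.continuousOn_symm.isOpen_inter_preimage f.open_target hU
  have hVne : V.Nonempty := ⟨f m, mem_image_of_mem _ ⟨hmU, mem_chart_source EE m⟩⟩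
  have hsub : V ⊆ ⋃ σ' ∈ T, (G σ') '' (A σ') := by
    rintro y ⟨m', ⟨hm'U, hm'src⟩, rfl⟩
    obtain ⟨σ, rfl⟩ := hsurj m'
    have hσK : σ ∈ K := by
      intro h
      have hmem : φ σ ∈ U ∩ {m : M | ∃ σ₀ : S, φ σ₀ = m ∧
          IsLocalDiffeomorphAt (𝓡 n) (𝓡 n) (⊤ : ℕ∞) φ σ₀} := ⟨hm'U, σ, rfl, h⟩
      rw [hcon] at hmem
      exact hmem
    obtain ⟨σ', hσ'T, hσchart⟩ := hcover σ
    have hmemA : f (φ σ) ∈ (G σ') '' (A σ') := by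
      rw [Set.mem_image]
      refine ⟨chartAt EE σ' σ, ?_, ?_⟩
      · exact Set.mem_image_of_mem _ (Set.mem_inter (Set.mem_inter hσK hm'src) hσchart)
      · simp only [hGdef, Function.comp_apply, (chartAt EE σ').left_inv hσchart]
    exact mem_biUnion hσ'T hmemA
  have hzero : volume V = 0 := by
    refine le_antisymm ?_ zero_le
    calc volume V ≤ volume (⋃ σ' ∈ T, (G σ') '' (A σ')) := measure_mono hsub
      _ = 0 := (measure_biUnion_null_iff hTc).2 fun σ' _ => claim1 σ'
  exact (hVopen.measure_pos volume hVne).ne' hzero
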